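/- arXiv:2505.09642 — 2 statements merged into one kernel-verified Lean document; each statement's English description precedes it below -/
import Mathlib

section
/- Let H be a nonempty hypergraph on vertex set V(H), let e ∈ H be a hyperedge and let s ⊆ e be nonempty. Let H₁ = H − (e \ s) = {f \ (e \ s) : f ∈ H}, let H₂ = H₁ \ N_{H₁}(s) be the hypergraph obtained from H₁ by removing all hyperedges meeting s, and let V₁ = V(H₁) \ (V(H₂) ∪ s). Then |hit_H(e,s)| = 2^{|V₁|} · |hit_{H₂}| (where |hit_∅| = 1 by convention). -/
/-- The vertex set `V(H) = ⋃_{e ∈ H} e` of a hypergraph `H`. -/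
def vertexSet {α : Type*} [DecidableEq α] (H : Finset (Finset α)) : Finset α := H.sup id

/-- The set `hit_H` of all hitting sets of a hypergraph `H`:
subsets `t ⊆ V(H)` meeting every hyperedge of `H`.  (For `H = ∅` this is `{∅}`,
matching the convention `|hit_∅| = 1`.) -/
def hitSets {α : Type*} [DecidableEq α] (H : Finset (Finset α)) : Finset (Finset α) :=
  (vertexSet H).powerset.filter (fun t => ∀ e ∈ H, (t ∩ e).Nonempty)

lemma mem_vertexSet_iff {α : Type*} [DecidableEq α] (H : Finset (Finset α)) (x : α) :
    x ∈ vertexSet H ↔ ∃ f ∈ H, x ∈ f := by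
  simp [vertexSet, Finset.mem_sup]

/-- Let `H` be a nonempty hypergraph, `e ∈ H` and `∅ ≠ s ⊆ e`.  With
`H₁ = H − (e \ s)`, `H₂ = H₁ \ N_{H₁}(s)` and `V₁ = V(H₁) \ (V(H₂) ∪ s)`, one has
`|hit_H(e,s)| = 2^{|V₁|} · |hit_{H₂}|`. -/
theorem stmt_7 {α : Type*} [DecidableEq α] (H : Finset (Finset α))
    (hH : H.Nonempty) (e : Finset α) (he : e ∈ H)
    (s : Finset α) (hs : s ⊆ e) (hsne : s.Nonempty)
    (H₁ H₂ : Finset (Finset α)) (V₁ : Finset α)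
    (hH₁ : H₁ = H.image (fun f => f \ (e \ s)))
    (hH₂ : H₂ = H₁ \ (H₁.filter (fun f => (f ∩ s).Nonempty)))
    (hV₁ : V₁ = vertexSet H₁ \ (vertexSet H₂ ∪ s)) :
    ((hitSets H).filter (fun t => t ∩ e = s)).card = 2 ^ V₁.card * (hitSets H₂).card := by
  classical
  set p := e \ s with hp
  set W := vertexSet H with hW
  set W₁ := vertexSet H₁ with hWone
  set W₂ := vertexSet H₂ with hWtwo
  -- members of H₂ are in H₁ and disjoint from s
  have hH₂mem : ∀ g ∈ H₂, g ∈ H₁ ∧ g ∩ s = ∅ := by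
    intro g hg
    rw [hH₂, Finset.mem_sdiff, Finset.mem_filter] at hg
    refine ⟨hg.1, ?_⟩
    rw [← Finset.not_nonempty_iff_eq_empty]
    exact fun h => hg.2 ⟨hg.1, h⟩
  have hW1 : W₁ = W \ p := by
    ext x
    simp only [hWone, hW, hH₁, mem_vertexSet_iff, Finset.mem_image, Finset.mem_sdiff]
    constructor
    · rintro ⟨g, ⟨f, hf, rfl⟩, hx⟩
      rw [Finset.mem_sdiff] at hx
      exact ⟨⟨f, hf, hx.1⟩, hx.2⟩
    · rintro ⟨⟨f, hf, hx⟩, hxp⟩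
      exact ⟨f \ p, ⟨f, hf, rfl⟩, Finset.mem_sdiff.mpr ⟨hx, hxp⟩⟩
  have hsH1 : s ∈ H₁ := by
    rw [hH₁, Finset.mem_image]
    refine ⟨e, he, ?_⟩
    rw [Finset.sdiff_sdiff_self_left, Finset.inter_eq_right.mpr hs]
  have hsW1 : s ⊆ W₁ := fun x hx => (mem_vertexSet_iff H₁ x).mpr ⟨s, hsH1, hx⟩
  have hH₂sub : H₂ ⊆ H₁ := by rw [hH₂]; exact Finset.sdiff_subset
  have hW2W1 : W₂ ⊆ W₁ := by
    intro x hx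
    obtain ⟨g, hg, hxg⟩ := (mem_vertexSet_iff H₂ x).mp hx
    exact (mem_vertexSet_iff H₁ x).mpr ⟨g, hH₂sub hg, hxg⟩
  have hW1W : W₁ ⊆ W := by rw [hW1]; exact Finset.sdiff_subset
  have heW : e ⊆ W := fun x hx => (mem_vertexSet_iff H x).mpr ⟨e, he, hx⟩
  have hW2s : ∀ x ∈ W₂, x ∉ s := by
    intro x hx hxs
    obtain ⟨g, hg, hxg⟩ := (mem_vertexSet_iff H₂ x).mp hx
    have := hH₂mem g hg
    have : x ∈ g ∩ s := Finset.mem_inter.mpr ⟨hxg, hxs⟩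
    rw [(hH₂mem g hg).2] at this
    exact absurd this (Finset.notMem_empty x)
  have hW1e : ∀ x ∈ W₁, x ∈ e → x ∈ s := by
    intro x hx hxe
    rw [hW1, Finset.mem_sdiff, hp, Finset.mem_sdiff] at hx
    by_contra hxs
    exact hx.2 ⟨hxe, hxs⟩
  have hW2e : ∀ x ∈ W₂, x ∉ e := fun x hx hxe =>
    hW2s x hx (hW1e x (hW2W1 hx) hxe)
  have hV1W1 : V₁ ⊆ W₁ := by rw [hV₁]; exact Finset.sdiff_subset
  have hV1s : ∀ x ∈ V₁, x ∉ s := by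
    intro x hx
    rw [hV₁, Finset.mem_sdiff, Finset.mem_union] at hx
    exact fun h => hx.2 (Or.inr h)
  have hV1W2 : ∀ x ∈ V₁, x ∉ W₂ := by
    intro x hx
    rw [hV₁, Finset.mem_sdiff, Finset.mem_union] at hx
    exact fun h => hx.2 (Or.inl h)
  have hV1e : ∀ x ∈ V₁, x ∉ e := fun x hx hxe =>
    hV1s x hx (hW1e x (hV1W1 hx) hxe)
  have key : ((hitSets H).filter (fun t => t ∩ e = s)).card
      = (V₁.powerset ×ˢ hitSets H₂).card := by
    apply Finset.card_nbij' (fun t => (t ∩ V₁, t ∩ W₂)) (fun q => s ∪ q.1 ∪ q.2)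
    · -- forward membership
      intro t ht
      rw [Finset.mem_coe, Finset.mem_filter, hitSets, Finset.mem_filter, Finset.mem_powerset] at ht
      obtain ⟨⟨htW, hhit⟩, hte⟩ := ht
      have htp : ∀ x ∈ t, x ∉ p := by
        intro x hxt hxp
        rw [hp, Finset.mem_sdiff] at hxp
        have : x ∈ t ∩ e := Finset.mem_inter.mpr ⟨hxt, hxp.1⟩
        rw [hte] at this
        exact hxp.2 this
      rw [Finset.mem_coe, Finset.mem_product]
      refine ⟨Finset.mem_powerset.mpr Finset.inter_subset_right, ?_⟩
      rw [hitSets, Finset.mem_filter, Finset.mem_powerset]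
      refine ⟨Finset.inter_subset_right, ?_⟩
      intro g hg
      obtain ⟨hgH1, _⟩ := hH₂mem g hg
      rw [hH₁, Finset.mem_image] at hgH1
      obtain ⟨f, hf, rfl⟩ := hgH1
      obtain ⟨x, hx⟩ := hhit f hf
      rw [Finset.mem_inter] at hx
      have hxg : x ∈ f \ p := Finset.mem_sdiff.mpr ⟨hx.2, htp x hx.1⟩
      have hxW2 : x ∈ W₂ := (mem_vertexSet_iff H₂ x).mpr ⟨f \ p, hg, hxg⟩
      exact ⟨x, Finset.mem_inter.mpr ⟨Finset.mem_inter.mpr ⟨hx.1, hxW2⟩, hxg⟩⟩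
    · -- backward membership
      rintro ⟨a, b⟩ hq
      rw [Finset.mem_coe, Finset.mem_product, Finset.mem_powerset] at hq
      obtain ⟨ha, hb⟩ := hq
      rw [hitSets, Finset.mem_filter, Finset.mem_powerset] at hb
      obtain ⟨hbW2, hbhit⟩ := hb
      rw [Finset.mem_coe, Finset.mem_filter, hitSets, Finset.mem_filter, Finset.mem_powerset]
      have hbW2' : b ⊆ W₂ := hbW2
      refine ⟨⟨?_, ?_⟩, ?_⟩
      · intro x hx
        rcases Finset.mem_union.mp hx with hx | hx
        · rcases Finset.mem_union.mp hx with hx | hx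
          · exact heW (hs hx)
          · exact hW1W (hV1W1 (ha hx))
        · exact hW1W (hW2W1 (hbW2' hx))
      · intro f hf
        by_cases hfs : ((f \ p) ∩ s).Nonempty
        · obtain ⟨x, hx⟩ := hfs
          rw [Finset.mem_inter, Finset.mem_sdiff] at hx
          exact ⟨x, Finset.mem_inter.mpr
            ⟨Finset.mem_union.mpr (Or.inl (Finset.mem_union.mpr (Or.inl hx.2))), hx.1.1⟩⟩
        · have hfH2 : f \ p ∈ H₂ := by
            rw [hH₂, Finset.mem_sdiff, Finset.mem_filter]
            have hfH1 : f \ p ∈ H₁ := by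
              rw [hH₁, Finset.mem_image]; exact ⟨f, hf, rfl⟩
            exact ⟨hfH1, fun h => hfs h.2⟩
          obtain ⟨x, hx⟩ := hbhit _ hfH2
          rw [Finset.mem_inter, Finset.mem_sdiff] at hx
          exact ⟨x, Finset.mem_inter.mpr
            ⟨Finset.mem_union.mpr (Or.inr hx.1), hx.2.1⟩⟩
      · -- (s ∪ a ∪ b) ∩ e = s
        ext x
        rw [Finset.mem_inter, Finset.mem_union, Finset.mem_union]
        constructor
        · rintro ⟨(hx | hx) | hx, hxe⟩
          · exact hx
          · exact absurd hxe (hV1e x (ha hx))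
          · exact absurd hxe (hW2e x (hbW2' hx))
        · exact fun hx => ⟨Or.inl (Or.inl hx), hs hx⟩
    · -- left inverse
      intro t ht
      rw [Finset.mem_coe, Finset.mem_filter, hitSets, Finset.mem_filter, Finset.mem_powerset] at ht
      obtain ⟨⟨htW, hhit⟩, hte⟩ := ht
      have hst : s ⊆ t := by rw [← hte]; exact Finset.inter_subset_left
      have htp : ∀ x ∈ t, x ∉ p := by
        intro x hxt hxp
        rw [hp, Finset.mem_sdiff] at hxp
        have : x ∈ t ∩ e := Finset.mem_inter.mpr ⟨hxt, hxp.1⟩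
        rw [hte] at this
        exact hxp.2 this
      apply Finset.Subset.antisymm
      · intro x hx
        rcases Finset.mem_union.mp hx with hx | hx
        · rcases Finset.mem_union.mp hx with hx | hx
          · exact hst hx
          · exact (Finset.mem_inter.mp hx).1
        · exact (Finset.mem_inter.mp hx).1
      · intro x hxt
        have hxW1 : x ∈ W₁ := by
          rw [hW1, Finset.mem_sdiff]
          exact ⟨htW hxt, htp x hxt⟩
        by_cases hxs : x ∈ s
        · exact Finset.mem_union.mpr (Or.inl (Finset.mem_union.mpr (Or.inl hxs)))
        by_cases hxW2 : x ∈ W₂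
        · exact Finset.mem_union.mpr (Or.inr (Finset.mem_inter.mpr ⟨hxt, hxW2⟩))
        · have hxV1 : x ∈ V₁ := by
            rw [hV₁, Finset.mem_sdiff, Finset.mem_union]
            exact ⟨hxW1, fun h => h.elim hxW2 hxs⟩
          exact Finset.mem_union.mpr (Or.inl (Finset.mem_union.mpr
            (Or.inr (Finset.mem_inter.mpr ⟨hxt, hxV1⟩))))
    · -- right inverse
      rintro ⟨a, b⟩ hq
      rw [Finset.mem_coe, Finset.mem_product, Finset.mem_powerset] at hq
      obtain ⟨ha, hb⟩ := hq
      rw [hitSets, Finset.mem_filter, Finset.mem_powerset] at hb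
      have hbW2' : b ⊆ W₂ := hb.1
      have h1 : (s ∪ a ∪ b) ∩ V₁ = a := by
        ext x
        rw [Finset.mem_inter, Finset.mem_union, Finset.mem_union]
        constructor
        · rintro ⟨(hx | hx) | hx, hxV⟩
          · exact absurd hx (hV1s x hxV)
          · exact hx
          · exact absurd (hbW2' hx) (hV1W2 x hxV)
        · exact fun hx => ⟨Or.inl (Or.inr hx), ha hx⟩
      have h2 : (s ∪ a ∪ b) ∩ W₂ = b := by
        ext x
        rw [Finset.mem_inter, Finset.mem_union, Finset.mem_union]
        constructor
        · rintro ⟨(hx | hx) | hx, hxW⟩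
          · exact absurd hx (hW2s x hxW)
          · exact absurd hxW (hV1W2 x (ha hx))
          · exact hx
        · exact fun hx => ⟨Or.inr hx, hbW2' hx⟩
      simp only [Prod.mk.injEq]
      exact ⟨h1, h2⟩
  rw [key, Finset.card_product, Finset.card_powerset]
end

section
/- Let H be a hypergraph, e ∈ H a hyperedge, s ⊆ e nonempty, and let H₁ = H − (e \ s) and H₂ = H₁ \ N_{H₁}(s). Then s is a hyperedge of H₁, every hyperedge of H₂ is disjoint from s, and the map (t₂, w) ↦ s ∪ t₂ ∪ w is a bijection between pairs consisting of a hitting set t₂ of H₂ and a subset w of V₁ = V(H₁) \ (V(H₂) ∪ s), and the hitting sets t of H with t ∩ e = s. -/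
/-- Let `H` be a hypergraph, `e ∈ H`, `∅ ≠ s ⊆ e`, `H₁ = H − (e \ s)` and
`H₂ = H₁ \ N_{H₁}(s)`.  Then `s` is a hyperedge of `H₁`, every hyperedge of `H₂` is
disjoint from `s`, and `(t₂, w) ↦ s ∪ t₂ ∪ w` is a bijection between pairs of a hitting
set `t₂` of `H₂` and a subset `w ⊆ V₁ = V(H₁) \ (V(H₂) ∪ s)`, and the hitting sets `t`
of `H` with `t ∩ e = s`. -/
theorem stmt_14 {α : Type*} [DecidableEq α] (H : Finset (Finset α))
    (e : Finset α) (he : e ∈ H)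
    (s : Finset α) (hs : s ⊆ e) (hsne : s.Nonempty)
    (H₁ H₂ : Finset (Finset α)) (V₁ : Finset α)
    (hH₁ : H₁ = H.image (fun f => f \ (e \ s)))
    (hH₂ : H₂ = H₁ \ (H₁.filter (fun f => (f ∩ s).Nonempty)))
    (hV₁ : V₁ = vertexSet H₁ \ (vertexSet H₂ ∪ s)) :
    s ∈ H₁ ∧ (∀ f ∈ H₂, Disjoint f s) ∧
      Set.BijOn (fun p : Finset α × Finset α => s ∪ p.1 ∪ p.2)
        ↑((hitSets H₂) ×ˢ V₁.powerset)
        ↑((hitSets H).filter (fun t => t ∩ e = s)) := by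
  classical
  have hmem : ∀ (G : Finset (Finset α)) (x : α), x ∈ vertexSet G ↔ ∃ f ∈ G, x ∈ f := by
    intro G x; simp [vertexSet, Finset.mem_sup]
  have hsH₁ : s ∈ H₁ := by
    rw [hH₁]
    refine Finset.mem_image.mpr ⟨e, he, ?_⟩
    rw [Finset.sdiff_sdiff_self_left, Finset.inter_eq_right.mpr hs]
  have hdis : ∀ f ∈ H₂, Disjoint f s := by
    intro f hf
    rw [hH₂, Finset.mem_sdiff, Finset.mem_filter] at hf
    rw [Finset.disjoint_iff_inter_eq_empty, ← Finset.not_nonempty_iff_eq_empty]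
    exact fun hne => hf.2 ⟨hf.1, hne⟩
  have hH₂sub : H₂ ⊆ H₁ := hH₂ ▸ Finset.sdiff_subset
  have hV₂e : ∀ x ∈ vertexSet H₂, x ∉ e := by
    intro x hx hxe
    obtain ⟨f, hf, hxf⟩ := (hmem H₂ x).mp hx
    have hxs : x ∉ s := fun hxs => Finset.disjoint_left.mp (hdis f hf) hxf hxs
    obtain ⟨g, hg, rfl⟩ := Finset.mem_image.mp (hH₁ ▸ hH₂sub hf)
    exact (Finset.mem_sdiff.mp hxf).2 (Finset.mem_sdiff.mpr ⟨hxe, hxs⟩)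
  have hV₁e : ∀ x ∈ V₁, x ∉ e := by
    intro x hx hxe
    rw [hV₁, Finset.mem_sdiff, Finset.mem_union] at hx
    obtain ⟨f, hf, hxf⟩ := (hmem H₁ x).mp hx.1
    obtain ⟨g, hg, rfl⟩ := Finset.mem_image.mp (hH₁ ▸ hf)
    have hxs : x ∉ s := fun hxs => hx.2 (Or.inr hxs)
    exact (Finset.mem_sdiff.mp hxf).2 (Finset.mem_sdiff.mpr ⟨hxe, hxs⟩)
  have hV₁H : vertexSet H₁ ⊆ vertexSet H := by
    intro x hx
    obtain ⟨f, hf, hxf⟩ := (hmem H₁ x).mp hx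
    obtain ⟨g, hg, rfl⟩ := Finset.mem_image.mp (hH₁ ▸ hf)
    exact (hmem H x).mpr ⟨g, hg, (Finset.mem_sdiff.mp hxf).1⟩
  have cover : ∀ x ∈ vertexSet H, x ∉ e → x ∈ vertexSet H₁ := by
    intro x hx hxe
    obtain ⟨f, hf, hxf⟩ := (hmem H x).mp hx
    refine (hmem H₁ x).mpr ⟨f \ (e \ s), hH₁ ▸ Finset.mem_image_of_mem _ hf, ?_⟩
    exact Finset.mem_sdiff.mpr ⟨hxf, fun h => hxe (Finset.mem_sdiff.mp h).1⟩
  -- membership characterization of hitSets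
  have hhit : ∀ (G : Finset (Finset α)) (t : Finset α),
      t ∈ hitSets G ↔ t ⊆ vertexSet G ∧ ∀ f ∈ G, (t ∩ f).Nonempty := by
    intro G t; simp [hitSets, Finset.mem_filter, Finset.mem_powerset]
  -- source membership characterization
  have hsrc : ∀ p : Finset α × Finset α,
      p ∈ ((hitSets H₂) ×ˢ V₁.powerset : Finset (Finset α × Finset α)) ↔
        (p.1 ⊆ vertexSet H₂ ∧ ∀ f ∈ H₂, (p.1 ∩ f).Nonempty) ∧ p.2 ⊆ V₁ := by
    intro p
    rw [Finset.mem_product, Finset.mem_powerset, hhit]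
  refine ⟨hsH₁, hdis, ?_, ?_, ?_⟩
  · -- MapsTo
    intro p hp
    rw [Finset.mem_coe, hsrc] at hp
    obtain ⟨⟨ht₂V, ht₂hit⟩, hw⟩ := hp
    rw [Finset.mem_coe, Finset.mem_filter]
    have hte : ∀ x ∈ p.1 ∪ p.2, x ∉ e := by
      intro x hx
      rcases Finset.mem_union.mp hx with h | h
      · exact hV₂e x (ht₂V h)
      · exact hV₁e x (hw h)
    constructor
    · rw [hhit]
      constructor
      · intro x hx
        rcases Finset.mem_union.mp hx with h | h
        · rcases Finset.mem_union.mp h with h | h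
          · exact (hmem H x).mpr ⟨e, he, hs h⟩
          · obtain ⟨f, hf, hxf⟩ := (hmem H₂ x).mp (ht₂V h)
            exact hV₁H ((hmem H₁ x).mpr ⟨f, hH₂sub hf, hxf⟩)
        · have h2 := hw h
          rw [hV₁, Finset.mem_sdiff] at h2
          exact hV₁H h2.1
      · intro f hf
        by_cases hfs : ((f \ (e \ s)) ∩ s).Nonempty
        · obtain ⟨x, hx⟩ := hfs
          rw [Finset.mem_inter, Finset.mem_sdiff] at hx
          exact ⟨x, Finset.mem_inter.mpr ⟨Finset.mem_union.mpr
            (Or.inl (Finset.mem_union.mpr (Or.inl hx.2))), hx.1.1⟩⟩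
        · have hf₂ : f \ (e \ s) ∈ H₂ := by
            rw [hH₂, Finset.mem_sdiff, Finset.mem_filter]
            have : f \ (e \ s) ∈ H₁ := hH₁ ▸ Finset.mem_image_of_mem _ hf
            exact ⟨this, fun h => hfs h.2⟩
          obtain ⟨x, hx⟩ := ht₂hit _ hf₂
          rw [Finset.mem_inter, Finset.mem_sdiff] at hx
          exact ⟨x, Finset.mem_inter.mpr ⟨Finset.mem_union.mpr
            (Or.inl (Finset.mem_union.mpr (Or.inr hx.1))), hx.2.1⟩⟩
    · ext x
      simp only [Finset.mem_inter, Finset.mem_union]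
      constructor
      · rintro ⟨((hxs | hx2) | hxw), hxe⟩
        · exact hxs
        · exact absurd hxe (hV₂e x (ht₂V hx2))
        · exact absurd hxe (hV₁e x (hw hxw))
      · exact fun hxs => ⟨Or.inl (Or.inl hxs), hs hxs⟩
  · -- InjOn
    have key : ∀ p ∈ ((hitSets H₂) ×ˢ V₁.powerset : Finset (Finset α × Finset α)),
        (s ∪ p.1 ∪ p.2) ∩ vertexSet H₂ = p.1 ∧ (s ∪ p.1 ∪ p.2) ∩ V₁ = p.2 := by
      intro p hp
      rw [hsrc] at hp
      obtain ⟨⟨ht₂V, _⟩, hw⟩ := hp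
      constructor
      · ext x
        simp only [Finset.mem_inter, Finset.mem_union]
        constructor
        · rintro ⟨((hxs | hx2) | hxw), hxV⟩
          · exact absurd (hs hxs) (hV₂e x hxV)
          · exact hx2
          · have := hw hxw; rw [hV₁, Finset.mem_sdiff, Finset.mem_union] at this
            exact absurd (Or.inl hxV) this.2
        · exact fun h => ⟨Or.inl (Or.inr h), ht₂V h⟩
      · ext x
        simp only [Finset.mem_inter, Finset.mem_union]
        constructor
        · rintro ⟨((hxs | hx2) | hxw), hxV⟩
          · rw [hV₁, Finset.mem_sdiff, Finset.mem_union] at hxV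
            exact absurd (Or.inr hxs) hxV.2
          · rw [hV₁, Finset.mem_sdiff, Finset.mem_union] at hxV
            exact absurd (Or.inl (ht₂V hx2)) hxV.2
          · exact hxw
        · exact fun h => ⟨Or.inr h, hw h⟩
    intro p hp q hq heq
    simp only [Finset.mem_coe] at hp hq
    obtain ⟨hp1, hp2⟩ := key p hp
    obtain ⟨hq1, hq2⟩ := key q hq
    simp only at heq
    exact Prod.ext (by rw [← hp1, ← hq1, heq]) (by rw [← hp2, ← hq2, heq])
  · -- SurjOn
    intro t ht
    rw [Finset.mem_coe, Finset.mem_filter, hhit] at ht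
    obtain ⟨⟨htV, hthit⟩, hte⟩ := ht
    refine ⟨(t ∩ vertexSet H₂, t ∩ V₁), ?_, ?_⟩
    · rw [Finset.mem_coe, hsrc]
      refine ⟨⟨Finset.inter_subset_right, ?_⟩, Finset.inter_subset_right⟩
      intro f hf
      obtain ⟨g, hg, rfl⟩ := Finset.mem_image.mp (hH₁ ▸ hH₂sub hf)
      obtain ⟨x, hx⟩ := hthit g hg
      rw [Finset.mem_inter] at hx
      have hxes : x ∉ e \ s := by
        intro h
        rw [Finset.mem_sdiff] at h
        exact h.2 (hte ▸ Finset.mem_inter.mpr ⟨hx.1, h.1⟩)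
      have hxf : x ∈ g \ (e \ s) := Finset.mem_sdiff.mpr ⟨hx.2, hxes⟩
      exact ⟨x, Finset.mem_inter.mpr ⟨Finset.mem_inter.mpr
        ⟨hx.1, (hmem H₂ x).mpr ⟨_, hf, hxf⟩⟩, hxf⟩⟩
    · simp only
      ext x
      simp only [Finset.mem_union, Finset.mem_inter]
      constructor
      · rintro ((hxs | ⟨hxt, _⟩) | ⟨hxt, _⟩)
        · exact Finset.mem_of_mem_inter_left (show x ∈ t ∩ e by rw [hte]; exact hxs)
        · exact hxt
        · exact hxt
      · intro hxt
        by_cases hxe : x ∈ e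
        · exact Or.inl (Or.inl (by rw [← hte]; exact Finset.mem_inter.mpr ⟨hxt, hxe⟩))
        · have hx1 : x ∈ vertexSet H₁ := cover x (htV hxt) hxe
          by_cases hx2 : x ∈ vertexSet H₂
          · exact Or.inl (Or.inr ⟨hxt, hx2⟩)
          · refine Or.inr ⟨hxt, ?_⟩
            rw [hV₁, Finset.mem_sdiff, Finset.mem_union]
            exact ⟨hx1, fun h => h.elim hx2 fun hxs => hxe (hs hxs)⟩
end
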